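/- In a k-connected graph G with nonadjacent vertices s, t of degree > k: if s lies in a small tight set with minimal small tight set R_s, and t ∉ R_s ∪ ∂R_s, then ∂R_s is a minimum s–t vertex cut (of size k), i.e., κ(s,t) = k and ∂R_s separates s from t. -/

import Mathlib

open Set

variable {V : Type*} [Fintype V] [DecidableEq V]

/-- The boundary (neighborhood) of a vertex set: vertices outside `A` adjacent to `A`. -/
def bdry (G : SimpleGraph V) (A : Set V) : Set V := {v | v ∉ A ∧ ∃ a ∈ A, G.Adj a v}

/-- The "node complement" `A* = V \ (A ∪ ∂A)`. -/
def nstar (G : SimpleGraph V) (A : Set V) : Set V := (A ∪ bdry G A)ᶜ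

/-- `C` is a vertex set separating `s` from `t`. -/
def IsSep (G : SimpleGraph V) (s t : V) (C : Set V) : Prop :=
  s ∉ C ∧ t ∉ C ∧ ∀ p : G.Walk s t, ∃ v ∈ C, v ∈ p.support

/-- `κ(s,t)`: minimum size of an `s`–`t` vertex cut. -/
noncomputable def kappa (G : SimpleGraph V) (s t : V) : ℕ :=
  sInf {n | ∃ C : Set V, C.ncard = n ∧ IsSep G s t C}

/-- A set is tight if `|∂A| = k` and `A* ≠ ∅`. -/
def Tight (G : SimpleGraph V) (k : ℕ) (A : Set V) : Prop :=
  (bdry G A).ncard = k ∧ (nstar G A).Nonempty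

/-- A set is small if `|A| ≤ (n - k)/2`. -/
def SmallSet (k : ℕ) (A : Set V) : Prop := 2 * A.ncard + k ≤ Fintype.card V

/-- `G` is `k`-connected. -/
def KConn (G : SimpleGraph V) (k : ℕ) : Prop :=
  k + 1 ≤ Fintype.card V ∧
    ∀ s t : V, s ≠ t → ∀ C : Set V, IsSep G s t C → k ≤ C.ncard

/-- degree of a vertex -/
noncomputable def deg (G : SimpleGraph V) (v : V) : ℕ := (G.neighborSet v).ncard

/-- `X` is an `st`-tight set: `s ∈ X`, `t ∈ X*` and `|∂X| = κ(s,t)`. -/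
def TightST (G : SimpleGraph V) (s t : V) (X : Set V) : Prop :=
  s ∈ X ∧ t ∈ nstar G X ∧ (bdry G X).ncard = kappa G s t

/-- `R_s`: intersection of all small tight sets containing `s`. -/
def Rmin (G : SimpleGraph V) (k : ℕ) (s : V) : Set V :=
  ⋂₀ {A : Set V | Tight G k A ∧ SmallSet k A ∧ s ∈ A}

/-- Two sets are laminar if disjoint or one contains the other. -/
def Laminar (X Y : Set V) : Prop := Disjoint X Y ∨ X ⊆ Y ∨ Y ⊆ X

/-- `d`-degeneracy: every nonempty vertex subset has a vertex with at most `d`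
neighbors inside it. -/
def Degenerate (G : SimpleGraph V) (d : ℕ) : Prop :=
  ∀ W : Set V, W.Nonempty → ∃ v ∈ W, (G.neighborSet v ∩ W).ncard ≤ d

/-- The set of vertices reachable from `s` avoiding `C`. -/
def Reach (G : SimpleGraph V) (C : Set V) (s : V) : Set V :=
  {v | ∃ p : G.Walk s v, ∀ u ∈ p.support, u ∉ C}

lemma walk_hits_bdry {G : SimpleGraph V} {A : Set V} :
    ∀ {x y : V}, (p : G.Walk x y) → x ∈ A → y ∉ A → ∃ v ∈ bdry G A, v ∈ p.support := by
  intro x y p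
  induction p with
  | nil => intro hx hy; exact absurd hx hy
  | @cons u v w h q ih =>
    intro hx hy
    by_cases hv : v ∈ A
    · obtain ⟨z, hz1, hz2⟩ := ih hv hy
      exact ⟨z, hz1, by simp [SimpleGraph.Walk.support_cons, hz2]⟩
    · exact ⟨v, ⟨hv, u, hx, h⟩, by simp [SimpleGraph.Walk.support_cons]⟩

lemma isSep_bdry {G : SimpleGraph V} {A : Set V} {s t : V}
    (hs : s ∈ A) (ht : t ∈ nstar G A) : IsSep G s t (bdry G A) := by
  have htA : t ∉ A ∧ t ∉ bdry G A := by
    simpa [nstar, not_or] using ht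
  exact ⟨fun h => h.1 hs, htA.2, fun p => walk_hits_bdry p hs htA.1⟩

lemma bdry_card_ge {G : SimpleGraph V} {k : ℕ} (hG : KConn G k) {A : Set V} {s : V}
    (hsA : s ∈ A) (hne : (nstar G A).Nonempty) : k ≤ (bdry G A).ncard := by
  obtain ⟨p, hp⟩ := hne
  have hps : s ≠ p := by
    rintro rfl
    exact hp (Or.inl hsA)
  exact hG.2 s p hps _ (isSep_bdry hsA hp)

lemma nstar_anti {G : SimpleGraph V} {A B : Set V} (h : A ⊆ B) : nstar G B ⊆ nstar G A := by
  apply compl_subset_compl.2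
  rintro v (hv | ⟨hv, a, ha, hadj⟩)
  · exact Or.inl (h hv)
  · by_cases hvB : v ∈ B
    · exact Or.inl hvB
    · exact Or.inr ⟨hvB, a, h ha, hadj⟩

lemma bdry_submod (G : SimpleGraph V) (X Y : Set V) :
    (bdry G (X ∩ Y)).ncard + (bdry G (X ∪ Y)).ncard
      ≤ (bdry G X).ncard + (bdry G Y).ncard := by
  have h1 : bdry G (X ∩ Y) ∪ bdry G (X ∪ Y) ⊆ bdry G X ∪ bdry G Y := by
    rintro v (⟨hvn, a, ⟨haX, haY⟩, hadj⟩ | ⟨hvn, a, ha, hadj⟩)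
    · by_cases hX : v ∈ X
      · exact Or.inr ⟨fun hY => hvn ⟨hX, hY⟩, a, haY, hadj⟩
      · exact Or.inl ⟨hX, a, haX, hadj⟩
    · rcases ha with ha | ha
      · exact Or.inl ⟨fun h => hvn (Or.inl h), a, ha, hadj⟩
      · exact Or.inr ⟨fun h => hvn (Or.inr h), a, ha, hadj⟩
  have h2 : bdry G (X ∩ Y) ∩ bdry G (X ∪ Y) ⊆ bdry G X ∩ bdry G Y := by
    rintro v ⟨⟨_, a, ⟨haX, haY⟩, hadj⟩, ⟨hvn, _⟩⟩
    exact ⟨⟨fun h => hvn (Or.inl h), a, haX, hadj⟩, ⟨fun h => hvn (Or.inr h), a, haY, hadj⟩⟩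
  calc (bdry G (X ∩ Y)).ncard + (bdry G (X ∪ Y)).ncard
      = (bdry G (X ∩ Y) ∪ bdry G (X ∪ Y)).ncard + (bdry G (X ∩ Y) ∩ bdry G (X ∪ Y)).ncard := by
        rw [ncard_union_add_ncard_inter]
    _ ≤ (bdry G X ∪ bdry G Y).ncard + (bdry G X ∩ bdry G Y).ncard :=
        Nat.add_le_add (ncard_le_ncard h1) (ncard_le_ncard h2)
    _ = (bdry G X).ncard + (bdry G Y).ncard := ncard_union_add_ncard_inter _ _

set_option linter.unusedSectionVars false in
lemma tight_inter {G : SimpleGraph V} {k : ℕ} {s : V} (hG : KConn G k) {X Y : Set V}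
    (hX : Tight G k X ∧ SmallSet k X ∧ s ∈ X)
    (hY : Tight G k Y ∧ SmallSet k Y ∧ s ∈ Y) :
    Tight G k (X ∩ Y) ∧ SmallSet k (X ∩ Y) ∧ s ∈ X ∩ Y := by
  obtain ⟨⟨hXb, hXn⟩, hXs, hsX⟩ := hX
  obtain ⟨⟨hYb, hYn⟩, hYs, hsY⟩ := hY
  have hnstar : (nstar G (X ∩ Y)).Nonempty :=
    hXn.mono (nstar_anti inter_subset_left)
  have hunion : k ≤ (bdry G (X ∪ Y)).ncard := by
    rcases eq_empty_or_nonempty (nstar G (X ∪ Y)) with hE | hNE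
    · -- counting argument
      have hcover : (X ∪ Y) ∪ bdry G (X ∪ Y) = univ := by
        have := compl_empty_iff.1 hE
        simpa [nstar] using this
      have hdisj : Disjoint (X ∪ Y) (bdry G (X ∪ Y)) := by
        rw [disjoint_left]; rintro v hv ⟨hv', _⟩; exact hv' hv
      have hcard : (X ∪ Y).ncard + (bdry G (X ∪ Y)).ncard = Fintype.card V := by
        rw [← ncard_union_eq hdisj, hcover, ncard_univ, Nat.card_eq_fintype_card]
      have hsum : (X ∪ Y).ncard + (X ∩ Y).ncard = X.ncard + Y.ncard :=
        ncard_union_add_ncard_inter _ _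
      have hpos : 0 < (X ∩ Y).ncard := (ncard_pos).2 ⟨s, hsX, hsY⟩
      have hXs' := hXs; have hYs' := hYs
      unfold SmallSet at hXs' hYs'
      omega
    · exact bdry_card_ge hG (Or.inl hsX) hNE
  have hsub := bdry_submod G X Y
  have hle : (bdry G (X ∩ Y)).ncard ≤ k := by omega
  have hge : k ≤ (bdry G (X ∩ Y)).ncard := bdry_card_ge hG ⟨hsX, hsY⟩ hnstar
  refine ⟨⟨le_antisymm hle hge, hnstar⟩, ?_, hsX, hsY⟩
  have : (X ∩ Y).ncard ≤ X.ncard := ncard_le_ncard inter_subset_left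
  unfold SmallSet at hXs ⊢
  omega

set_option linter.unusedSectionVars false in
lemma sInter_closed {P : Set V → Prop}
    (hP : ∀ {X Y : Set V}, P X → P Y → P (X ∩ Y)) :
    ∀ (F : Set (Set V)), F.Finite → F.Nonempty → (∀ A ∈ F, P A) → P (⋂₀ F) := by
  intro F hF
  refine Set.Finite.induction_on (motive := fun F _ => F.Nonempty → (∀ A ∈ F, P A) → P (⋂₀ F)) F hF
    ?_ ?_
  · rintro ⟨x, hx⟩; exact absurd hx (by simp)
  · intro A F hA hFfin ih _ hall
    rw [sInter_insert]
    rcases F.eq_empty_or_nonempty with rfl | hFne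
    · simpa using hall A (by simp)
    · exact hP (hall A (by simp)) (ih hFne fun B hB => hall B (Or.inr hB))

theorem stmt19 (G : SimpleGraph V) (k : ℕ) (s t : V) (hG : KConn G k)
    (hst : ¬ G.Adj s t) (hne : s ≠ t) (hds : k < deg G s) (hdt : k < deg G t)
    (hs : ∃ A : Set V, Tight G k A ∧ SmallSet k A ∧ s ∈ A)
    (ht : t ∉ Rmin G k s ∪ bdry G (Rmin G k s)) :
    kappa G s t = k ∧ IsSep G s t (bdry G (Rmin G k s)) := by
  set F : Set (Set V) := {A : Set V | Tight G k A ∧ SmallSet k A ∧ s ∈ A} with hF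
  have hR : Tight G k (Rmin G k s) ∧ SmallSet k (Rmin G k s) ∧ s ∈ Rmin G k s := by
    have := sInter_closed (P := fun A => Tight G k A ∧ SmallSet k A ∧ s ∈ A)
      (fun hX hY => tight_inter hG hX hY) F (Set.toFinite F) hs (fun A hA => hA)
    exact this
  obtain ⟨⟨hRb, hRn⟩, hRsmall, hsR⟩ := hR
  have htn : t ∈ nstar G (Rmin G k s) := by
    simp only [nstar, mem_compl_iff]
    exact ht
  have hsep : IsSep G s t (bdry G (Rmin G k s)) := isSep_bdry hsR htn
  refine ⟨?_, hsep⟩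
  have hmem : k ∈ {n | ∃ C : Set V, C.ncard = n ∧ IsSep G s t C} :=
    ⟨bdry G (Rmin G k s), hRb, hsep⟩
  have hle : kappa G s t ≤ k := Nat.sInf_le hmem
  have hge : k ≤ kappa G s t := by
    obtain ⟨C, hC, hsepC⟩ := Nat.sInf_mem ⟨k, hmem⟩
    rw [kappa, ← hC]
    exact hG.2 s t hne C hsepC
  omega
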